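/- Let Π = (p_i) be a sequence of primes tending to infinity and let Γ be a Π-graded torsion group. Then every quotient of Γ is Π-graded; in particular, every quotient of Γ is residually finite. -/

import Mathlib

open scoped commutatorElement in
/-- `D_p(K) = K^p [K,K]`: the subgroup generated by `p`-th powers and commutators of
elements of `K`, as a subgroup of the ambient group. -/
def Dverbal {Γ : Type*} [Group Γ] (p : ℕ) (K : Subgroup Γ) : Subgroup Γ :=
  Subgroup.closure ({x : Γ | ∃ k ∈ K, x = k ^ p} ∪
    {x : Γ | ∃ a ∈ K, ∃ b ∈ K, x = ⁅a, b⁆})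

/-- The series `Γ^{Π(0)} = Γ`, `Γ^{Π(n)} = D_{p_n}(Γ^{Π(n-1)})`. -/
def piSeries {Γ : Type*} [Group Γ] (P : ℕ → ℕ) : ℕ → Subgroup Γ
  | 0 => ⊤
  | n + 1 => Dverbal (P (n + 1)) (piSeries P n)

lemma Dverbal_le {Γ : Type*} [Group Γ] (p : ℕ) (K : Subgroup Γ) : Dverbal p K ≤ K := by
  apply (Subgroup.closure_le K).mpr
  rintro x (⟨k, hk, rfl⟩ | ⟨a, ha, b, hb, rfl⟩)
  · exact pow_mem hk p
  · rw [commutatorElement_def]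
    exact mul_mem (mul_mem (mul_mem ha hb) (inv_mem ha)) (inv_mem hb)

lemma pow_mem_Dverbal {Γ : Type*} [Group Γ] {p : ℕ} {K : Subgroup Γ} {k : Γ} (hk : k ∈ K) :
    k ^ p ∈ Dverbal p K :=
  Subgroup.subset_closure (Or.inl ⟨k, hk, rfl⟩)

open scoped commutatorElement in
lemma map_Dverbal {Γ Δ : Type*} [Group Γ] [Group Δ] (f : Γ →* Δ) (p : ℕ) (K : Subgroup Γ) :
    (Dverbal p K).map f = Dverbal p (K.map f) := by
  rw [Dverbal, MonoidHom.map_closure, Dverbal, Set.image_union]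
  congr 1
  congr 1
  · ext x
    constructor
    · rintro ⟨y, ⟨k, hk, rfl⟩, rfl⟩
      exact ⟨f k, ⟨k, hk, rfl⟩, map_pow f k p⟩
    · rintro ⟨k', hk', rfl⟩
      obtain ⟨k, hk, rfl⟩ := Subgroup.mem_map.mp hk'
      exact ⟨k ^ p, ⟨k, hk, rfl⟩, map_pow f k p⟩
  · ext x
    constructor
    · rintro ⟨y, ⟨a, ha, b, hb, rfl⟩, rfl⟩
      exact ⟨f a, ⟨a, ha, rfl⟩, f b, ⟨b, hb, rfl⟩, map_commutatorElement f a b⟩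
    · rintro ⟨a', ha', b', hb', rfl⟩
      obtain ⟨a, ha, rfl⟩ := Subgroup.mem_map.mp ha'
      obtain ⟨b, hb, rfl⟩ := Subgroup.mem_map.mp hb'
      exact ⟨⁅a, b⁆, ⟨a, ha, b, hb, rfl⟩, map_commutatorElement f a b⟩

lemma map_piSeries {Γ Δ : Type*} [Group Γ] [Group Δ] (f : Γ →* Δ)
    (hf : Function.Surjective f) (P : ℕ → ℕ) (n : ℕ) :
    (piSeries (Γ := Γ) P n).map f = piSeries (Γ := Δ) P n := by
  induction n with
  | zero =>
    show (⊤ : Subgroup Γ).map f = ⊤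
    exact Subgroup.map_top_of_surjective f hf
  | succ n ih =>
    show ((Dverbal (P (n + 1)) (piSeries P n)).map f : Subgroup Δ) = _
    rw [map_Dverbal, ih]
    rfl

lemma piSeries_antitone {Γ : Type*} [Group Γ] (P : ℕ → ℕ) :
    Antitone (piSeries (Γ := Γ) P) :=
  antitone_nat_of_succ_le fun n => Dverbal_le (P (n + 1)) (piSeries P n)

lemma piSeries_step {Γ : Type*} [Group Γ] (P : ℕ → ℕ) {g : Γ} {n : ℕ}
    (hg : g ∈ piSeries P n) : g ^ P (n + 1) ∈ piSeries (Γ := Γ) P (n + 1) :=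
  pow_mem_Dverbal hg

/-- If `g ^ p ∈ H`, `g` has finite order coprime to `p`, then `g ∈ H`. -/
lemma mem_of_pow_mem {Γ : Type*} [Group Γ] {H : Subgroup Γ} {g : Γ} {p : ℕ}
    (hfin : IsOfFinOrder g) (hco : Nat.Coprime p (orderOf g)) (h : g ^ p ∈ H) : g ∈ H := by
  rcases eq_or_ne (orderOf g) 1 with h1 | h1
  · rw [orderOf_eq_one_iff.mp h1]
    exact one_mem H
  · have hd2 : 2 ≤ orderOf g := by
      have := hfin.orderOf_pos
      omega
    have ht0 : (orderOf g).totient ≠ 0 := (Nat.totient_pos.mpr hfin.orderOf_pos).ne'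
    have ht : p ^ (orderOf g).totient ≡ 1 [MOD orderOf g] := Nat.ModEq.pow_totient hco
    have ht' : p ^ (orderOf g).totient % orderOf g = 1 % orderOf g := ht
    have key : g ^ (p ^ (orderOf g).totient) = g := by
      rw [← pow_mod_orderOf g (p ^ (orderOf g).totient), ht',
        Nat.mod_eq_of_lt (by omega : 1 < orderOf g), pow_one]
    have hsplit : g ^ (p ^ (orderOf g).totient) = (g ^ p) ^ p ^ ((orderOf g).totient - 1) := by
      have h9 : (orderOf g).totient - 1 + 1 = (orderOf g).totient := by omega
      rw [← pow_mul, ← pow_succ', h9]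
    rw [← key, hsplit]
    exact pow_mem h _

/-- If `Π` is a sequence of primes tending to infinity and `Γ` is a
`Π`-graded torsion group, then every quotient of `Γ` is `Π`-graded; in particular every
quotient of `Γ` is residually finite. -/
theorem statement5 {Γ : Type*} [Group Γ] (P : ℕ → ℕ)
    (hP : ∀ i, (P i).Prime)
    (hPinf : Filter.Tendsto P Filter.atTop Filter.atTop)
    (htorsion : ∀ g : Γ, IsOfFinOrder g)
    (hfin : ∀ n, (piSeries (Γ := Γ) P n).FiniteIndex)
    (hres : ⨅ n, piSeries (Γ := Γ) P n = ⊥)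
    (Δ : Type*) [Group Δ] (π : Γ →* Δ) (hπ : Function.Surjective π) :
    ((∀ n, (piSeries (Γ := Δ) P n).FiniteIndex) ∧ ⨅ n, piSeries (Γ := Δ) P n = ⊥) ∧
      (∀ g : Δ, g ≠ 1 → ∃ N : Subgroup Δ, N.Normal ∧ N.FiniteIndex ∧ g ∉ N) := by
  have hmap : ∀ n, (piSeries (Γ := Γ) P n).map π = piSeries (Γ := Δ) P n :=
    map_piSeries π hπ P
  -- finite index in the quotient
  have hfinΔ : ∀ n, (piSeries (Γ := Δ) P n).FiniteIndex := by
    intro n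
    have hdvd := Subgroup.index_map_dvd (piSeries (Γ := Γ) P n) hπ
    rw [hmap n] at hdvd
    refine ⟨fun h0 => (hfin n).index_ne_zero ?_⟩
    rw [h0] at hdvd
    exact Nat.eq_zero_of_zero_dvd hdvd
  -- trivial intersection in the quotient
  have hresΔ : ⨅ n, piSeries (Γ := Δ) P n = ⊥ := by
    rw [Subgroup.eq_bot_iff_forall]
    intro y hy
    by_contra hy1
    have hymem : ∀ n, y ∈ piSeries (Γ := Δ) P n := fun n => Subgroup.mem_iInf.mp hy n
    have hyfin : IsOfFinOrder y := by
      obtain ⟨x, rfl⟩ := hπ y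
      exact π.isOfFinOrder (htorsion x)
    have hm0 : orderOf y ≠ 0 := hyfin.orderOf_pos.ne'
    have hm1 : orderOf y ≠ 1 := fun h => hy1 (orderOf_eq_one_iff.mp h)
    set q := (orderOf y).minFac with hqdef
    have hq : q.Prime := Nat.minFac_prime hm1
    -- an element z of prime order q, still in every term of the series
    set z := y ^ (orderOf y / q) with hzdef
    have hzq : z ^ q = 1 := by
      rw [hzdef, ← pow_mul, Nat.div_mul_cancel (Nat.minFac_dvd _), pow_orderOf_eq_one]
    have hz1 : z ≠ 1 := by
      intro h
      have hdvd : orderOf y ∣ orderOf y / q := orderOf_dvd_of_pow_eq_one (hzdef ▸ h)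
      have hlt : orderOf y / q < orderOf y :=
        Nat.div_lt_self (Nat.pos_of_ne_zero hm0) hq.one_lt
      have hpos : 0 < orderOf y / q :=
        Nat.div_pos (Nat.minFac_le (Nat.pos_of_ne_zero hm0)) hq.pos
      exact absurd (Nat.le_of_dvd hpos hdvd) (not_le.mpr hlt)
    have hordz : orderOf z = q := by
      rcases hq.eq_one_or_self_of_dvd _ (orderOf_dvd_of_pow_eq_one hzq) with h | h
      · exact absurd (orderOf_eq_one_iff.mp h) hz1
      · exact h
    -- choose n₀ with P i > q for all i ≥ n₀
    obtain ⟨n₀, hn₀⟩ := Filter.eventually_atTop.mp (hPinf.eventually_ge_atTop (q + 1))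
    -- lift z to an element of piSeries P n₀ in Γ
    have hzmem : z ∈ (piSeries (Γ := Γ) P n₀).map π := by
      rw [hmap]
      exact pow_mem (hymem n₀) _
    obtain ⟨g₀, hg₀mem, hg₀⟩ := Subgroup.mem_map.mp hzmem
    have hk0 : orderOf g₀ ≠ 0 := (htorsion g₀).orderOf_pos.ne'
    have hqk : q ∣ orderOf g₀ := by
      have h1 : orderOf (π g₀) ∣ orderOf g₀ :=
        orderOf_dvd_of_pow_eq_one (by rw [← map_pow, pow_orderOf_eq_one, map_one])
      rw [hg₀, hordz] at h1
      exact h1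
    set a := (orderOf g₀).factorization q with hadef
    have ha0 : a ≠ 0 := (hq.factorization_pos_of_dvd hk0 hqk).ne'
    set r := orderOf g₀ / q ^ a with hrdef
    have hkeq : q ^ a * r = orderOf g₀ := Nat.ordProj_mul_ordCompl_eq_self (orderOf g₀) q
    have hco : Nat.Coprime (q ^ a) r := Nat.Coprime.pow_left a (Nat.coprime_ordCompl hq hk0)
    obtain ⟨c, hc1, hc0⟩ := Nat.chineseRemainder hco 1 0
    have hrc : r ∣ c := Nat.modEq_zero_iff_dvd.mp hc0
    -- the good lift g : it maps to z and has q-power order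
    set g := g₀ ^ c with hgdef
    have hπg : π g = z := by
      have hcq : c % q = 1 % q := Nat.ModEq.of_dvd (dvd_pow_self q ha0) hc1
      rw [hgdef, map_pow, hg₀, ← pow_mod_orderOf z c, hordz, hcq,
        Nat.mod_eq_of_lt hq.one_lt, pow_one]
    have hordg : orderOf g ∣ q ^ a := by
      apply orderOf_dvd_of_pow_eq_one
      obtain ⟨e, he⟩ := hrc
      have hmul : c * q ^ a = orderOf g₀ * e := by
        rw [he, ← hkeq]
        ring
      rw [hgdef, ← pow_mul, hmul, pow_mul, pow_orderOf_eq_one, one_pow]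
    -- g lies in every term of the series of Γ
    have key : ∀ N, g ∈ piSeries (Γ := Γ) P (n₀ + N) := by
      intro N
      induction N with
      | zero => exact pow_mem hg₀mem c
      | succ N ih =>
        have hbig : q + 1 ≤ P (n₀ + N + 1) := hn₀ _ (by omega)
        have hco2 : Nat.Coprime (P (n₀ + N + 1)) (orderOf g) := by
          rw [(hP _).coprime_iff_not_dvd]
          intro hdvd
          have h2 : P (n₀ + N + 1) ∣ q := (hP _).dvd_of_dvd_pow (hdvd.trans hordg)
          have h3 : P (n₀ + N + 1) = q := (Nat.prime_dvd_prime_iff_eq (hP _) hq).mp h2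
          omega
        exact mem_of_pow_mem (htorsion g) hco2 (piSeries_step P ih)
    have hgall : ∀ N, g ∈ piSeries (Γ := Γ) P N := fun N =>
      piSeries_antitone P (Nat.le_add_left N n₀) (key N)
    have hgbot : g ∈ (⊥ : Subgroup Γ) := hres ▸ Subgroup.mem_iInf.mpr hgall
    have hg1 : g = 1 := Subgroup.mem_bot.mp hgbot
    exact hz1 (by rw [← hπg, hg1, map_one])
  refine ⟨⟨hfinΔ, hresΔ⟩, ?_⟩
  -- residual finiteness
  intro g hg
  have hex : ∃ n, g ∉ piSeries (Γ := Δ) P n := by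
    by_contra h
    push_neg at h
    exact hg (Subgroup.mem_bot.mp (hresΔ ▸ Subgroup.mem_iInf.mpr h))
  obtain ⟨n, hn⟩ := hex
  haveI := hfinΔ n
  exact ⟨(piSeries (Γ := Δ) P n).normalCore, inferInstance,
    Subgroup.finiteIndex_normalCore _, fun h => hn (Subgroup.normalCore_le _ h)⟩
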